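/- Define h_z(l,n,λ) = 1 for 0 ≤ z ≤ l and h_z(l,n,λ) = ((n-z+1) B_{z,l}(ν) + z B_{z-1,l}(ν))/(n+1) for l+1 ≤ z ≤ n+1, with ν = 1-λ and 0 < λ < 1, l ≥ 0, n ≥ l+1. Then h_z(l,n,λ) > 0 for all 0 ≤ z ≤ n+1, and h_z(l,n,λ) is strictly decreasing in z for l ≤ z ≤ n+1. -/

import Mathlib

/-- Binomial CDF: `B z l p = ∑_{j=0}^{l} C(z,j) p^j (1-p)^{z-j}`. -/
noncomputable def binCDF (z l : ℕ) (p : ℝ) : ℝ :=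
  ∑ j ∈ Finset.range (l + 1), (z.choose j : ℝ) * p ^ j * (1 - p) ^ (z - j)

/-- `h_z(l,n,λ)`. -/
noncomputable def hFun (l n z : ℕ) (lam : ℝ) : ℝ :=
  if z ≤ l then 1
  else (((n : ℝ) - z + 1) * binCDF z l (1 - lam)
        + (z : ℝ) * binCDF (z - 1) l (1 - lam)) / ((n : ℝ) + 1)

lemma binCDF_of_le (z l : ℕ) (p : ℝ) (h : z ≤ l) : binCDF z l p = 1 := by
  unfold binCDF
  rw [← Finset.sum_subset (Finset.range_subset_range.2 (by omega) :
      Finset.range (z + 1) ⊆ Finset.range (l + 1))]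
  · have h1 : (p + (1 - p)) ^ z
        = ∑ k ∈ Finset.range (z + 1), p ^ k * (1 - p) ^ (z - k) * (z.choose k : ℝ) :=
      add_pow p (1 - p) z
    have h2 : p + (1 - p) = 1 := by ring
    rw [h2, one_pow] at h1
    calc ∑ j ∈ Finset.range (z + 1), (z.choose j : ℝ) * p ^ j * (1 - p) ^ (z - j)
        = ∑ k ∈ Finset.range (z + 1), p ^ k * (1 - p) ^ (z - k) * (z.choose k : ℝ) := by
          apply Finset.sum_congr rfl
          intro k _
          ring
      _ = 1 := h1.symm
  · intro x hx hx2
    simp only [Finset.mem_range] at hx hx2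
    have : z < x := by omega
    simp [Nat.choose_eq_zero_of_lt this]

lemma binCDF_step (z l : ℕ) (p : ℝ) :
    binCDF z (l + 1) p
      = binCDF z l p + (z.choose (l + 1) : ℝ) * p ^ (l + 1) * (1 - p) ^ (z - (l + 1)) := by
  unfold binCDF
  rw [Finset.sum_range_succ]

lemma binCDF_succ (p : ℝ) (l : ℕ) : ∀ z : ℕ, l ≤ z →
    binCDF (z + 1) l p
      = binCDF z l p - (z.choose l : ℝ) * p ^ (l + 1) * (1 - p) ^ (z - l) := by
  induction l with
  | zero =>
    intro z _
    have e : ∀ w : ℕ, binCDF w 0 p = (1 - p) ^ w := by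
      intro w
      simp [binCDF]
    rw [e, e]
    simp only [Nat.choose_zero_right, Nat.cast_one, Nat.sub_zero, zero_add]
    rw [pow_succ]
    ring
  | succ l ih =>
    intro z hz
    have hlz : l ≤ z := by omega
    rw [binCDF_step (z + 1) l p, ih z hlz, binCDF_step z l p]
    have e1 : (z + 1) - (l + 1) = z - l := by omega
    have e2 : z - l = (z - (l + 1)) + 1 := by omega
    have e3 : ((z + 1).choose (l + 1) : ℝ) = (z.choose l : ℝ) + (z.choose (l + 1) : ℝ) := by
      rw [Nat.choose_succ_succ]
      push_cast
      ring
    rw [e1, e3, e2]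
    ring

lemma binCDF_pos (z l : ℕ) (p : ℝ) (hp0 : 0 ≤ p) (hp1 : p < 1) : 0 < binCDF z l p := by
  have hq : 0 < 1 - p := by linarith
  have h0 : (0:ℝ) < ((z.choose 0 : ℕ) : ℝ) * p ^ 0 * (1 - p) ^ (z - 0) := by
    simp only [Nat.choose_zero_right, Nat.cast_one, pow_zero, Nat.sub_zero, one_mul]
    positivity
  refine lt_of_lt_of_le h0 ?_
  apply Finset.single_le_sum (f := fun j => ((z.choose j : ℕ) : ℝ) * p ^ j * (1 - p) ^ (z - j))
  · intro i _
    have : (0:ℝ) ≤ 1 - p := le_of_lt hq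
    positivity
  · simp

lemma binCDF_lt (z l : ℕ) (p : ℝ) (hlz : l ≤ z) (hp0 : 0 < p) (hp1 : p < 1) :
    binCDF (z + 1) l p < binCDF z l p := by
  rw [binCDF_succ p l z hlz]
  have hq : 0 < 1 - p := by linarith
  have hc : 0 < (z.choose l : ℝ) := by
    exact_mod_cast Nat.choose_pos hlz
  have : 0 < (z.choose l : ℝ) * p ^ (l + 1) * (1 - p) ^ (z - l) := by positivity
  linarith

lemma hFun_eq (l n z : ℕ) (lam : ℝ) (h : l ≤ z) :
    hFun l n z lam = (((n : ℝ) - z + 1) * binCDF z l (1 - lam)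
        + (z : ℝ) * binCDF (z - 1) l (1 - lam)) / ((n : ℝ) + 1) := by
  unfold hFun
  split_ifs with hc
  · have hz : z = l := le_antisymm hc h
    subst hz
    rw [binCDF_of_le z z _ le_rfl, binCDF_of_le (z - 1) z _ (by omega)]
    have hne : ((n : ℝ) + 1) ≠ 0 := by positivity
    field_simp
    ring
  · rfl

theorem stmt_15 (lam : ℝ) (hlam0 : 0 < lam) (hlam1 : lam < 1)
    (l n : ℕ) (hn : l + 1 ≤ n) :
    (∀ z : ℕ, z ≤ n + 1 → 0 < hFun l n z lam) ∧
    (∀ z₁ z₂ : ℕ, l ≤ z₁ → z₁ < z₂ → z₂ ≤ n + 1 →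
      hFun l n z₂ lam < hFun l n z₁ lam) := by
  set p : ℝ := 1 - lam with hp
  have hp0 : 0 < p := by simp [hp]; linarith
  have hp1 : p < 1 := by simp [hp]; linarith
  have hden : (0:ℝ) < (n : ℝ) + 1 := by positivity
  constructor
  · intro z hz
    by_cases hzl : z ≤ l
    · simp [hFun, hzl]
    · unfold hFun
      rw [if_neg hzl]
      apply div_pos _ hden
      have hz1 : (0:ℝ) ≤ (n : ℝ) - z + 1 := by
        have : (z : ℝ) ≤ (n : ℝ) + 1 := by exact_mod_cast hz
        linarith
      have hB1 : 0 < binCDF z l (1 - lam) := binCDF_pos _ _ _ hp0.le hp1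
      have hB2 : 0 < binCDF (z - 1) l (1 - lam) := binCDF_pos _ _ _ hp0.le hp1
      have hzpos : (0:ℝ) < (z : ℝ) := by
        have : 0 < z := by omega
        exact_mod_cast this
      nlinarith
  · have step : ∀ z : ℕ, l ≤ z → z ≤ n → hFun l n (z + 1) lam < hFun l n z lam := by
      intro z hlz hzn
      rw [hFun_eq l n z lam hlz, hFun_eq l n (z + 1) lam (by omega)]
      simp only [Nat.add_sub_cancel]
      set B1 := binCDF (z + 1) l (1 - lam) with hB1
      set B0 := binCDF z l (1 - lam) with hB0
      set Bm := binCDF (z - 1) l (1 - lam) with hBm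
      have h1 : B1 < B0 := binCDF_lt z l _ hlz hp0 hp1
      have h2 : B0 ≤ Bm := by
        rcases eq_or_lt_of_le hlz with heq | hlt
        · rw [hB0, hBm, ← heq, binCDF_of_le l l _ le_rfl, binCDF_of_le (l-1) l _ (by omega)]
        · have hz1 : z = (z - 1) + 1 := by omega
          rw [hB0, hBm, hz1]
          exact (binCDF_lt (z - 1) l _ (by omega) hp0 hp1).le
      have hnz : (0:ℝ) ≤ (n : ℝ) - z := by
        have : (z : ℝ) ≤ (n : ℝ) := by exact_mod_cast hzn
        linarith
      have key : 0 < ((n:ℝ) - z) * (B0 - B1) + (z : ℝ) * (Bm - B0) := by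
        rcases eq_or_lt_of_le hlz with heq | hlt
        · -- z = l, so z < n and first term positive
          have hzn' : z < n := by omega
          have h3 : (1:ℝ) ≤ (n : ℝ) - z := by
            have : (z : ℝ) + 1 ≤ (n : ℝ) := by exact_mod_cast hzn'
            linarith
          have t1 : 0 < ((n:ℝ) - z) * (B0 - B1) := by nlinarith
          have t2 : 0 ≤ (z : ℝ) * (Bm - B0) := by
            have : (0:ℝ) ≤ (z:ℝ) := Nat.cast_nonneg z
            nlinarith
          linarith
        · -- l < z, so z ≥ 1 and second term positive
          have h2' : B0 < Bm := by
            have hz1 : z = (z - 1) + 1 := by omega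
            rw [hB0, hBm, hz1]
            exact binCDF_lt (z - 1) l _ (by omega) hp0 hp1
          have hzpos : (0:ℝ) < (z : ℝ) := by
            have : 0 < z := by omega
            exact_mod_cast this
          have t2 : 0 < (z : ℝ) * (Bm - B0) := by nlinarith
          have t1 : 0 ≤ ((n:ℝ) - z) * (B0 - B1) := by nlinarith
          linarith
      rw [div_lt_div_iff_of_pos_right hden]
      push_cast
      have id : ((n:ℝ) - ((z:ℝ) + 1) + 1) * B1 + ((z:ℝ) + 1) * B0
          = ((n:ℝ) - (z:ℝ) + 1) * B0 + (z:ℝ) * Bm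
            - (((n:ℝ) - (z:ℝ)) * (B0 - B1) + (z : ℝ) * (Bm - B0)) := by ring
      linarith
    intro z₁ z₂ h1 h2 h3
    have key : ∀ z₂ : ℕ, z₁ + 1 ≤ z₂ → z₂ ≤ n + 1 → hFun l n z₂ lam < hFun l n z₁ lam := by
      intro z₂ hz
      induction z₂, hz using Nat.le_induction with
      | base => exact fun _ => step z₁ h1 (by omega)

      | succ m hm ih =>
        intro hmn
        have h4 : hFun l n (m + 1) lam < hFun l n m lam :=
          step m (by omega) (by omega)
        have h5 : hFun l n m lam < hFun l n z₁ lam := ih (by omega)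
        linarith
    exact key z₂ h2 h3
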